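/- arXiv:2603.08050 — 4 statements merged into one kernel-verified Lean document; each statement's English description precedes it below -/
import Mathlib

section
/- Let $r>0$, $T>0$, $\varepsilon_0>\varepsilon_1\ge 0$, and let $\phi_1:[0,T]\to\mathbb{R}$ be continuously differentiable and strictly positive with $-\phi_1'(t)+r\,\phi_1(t)<\varepsilon_0-\varepsilon_1$ for all $t\in[0,T]$ and $\phi_1(0)<(\varepsilon_0-\varepsilon_1)\frac{1-e^{-rT}}{r}$. Then there exists a unique $t_1\in(0,T)$ such that $\phi_1(t)<\mathscr{E}(t)$ for all $t\in[0,t_1)$, $\phi_1(t_1)=\mathscr{E}(t_1)$, and $\phi_1(t)>\mathscr{E}(t)$ for all $t\in(t_1,T]$. -/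
open Real Set

/-- Under Assumption 2(ii) there is a unique crossing time `t1 ∈ (0,T)` of the
switching cost `φ1` and the present-value income gain `𝓔(t) = (ε0-ε1)(1-e^{-r(T-t)})/r`. -/
theorem stmt1 (r T ε0 ε1 : ℝ) (φ1 φ1' : ℝ → ℝ)
    (hr : 0 < r) (hT : 0 < T) (hε1 : 0 ≤ ε1) (hε : ε1 < ε0)
    (hpos : ∀ t ∈ Icc (0:ℝ) T, 0 < φ1 t)
    (hderiv : ∀ t ∈ Icc (0:ℝ) T, HasDerivAt φ1 (φ1' t) t)
    (hcont : ContinuousOn φ1' (Icc 0 T))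
    (hcost : ∀ t ∈ Icc (0:ℝ) T, -φ1' t + r * φ1 t < ε0 - ε1)
    (hinit : φ1 0 < (ε0 - ε1) * (1 - Real.exp (-(r * T))) / r) :
    ∃! t1 : ℝ, t1 ∈ Ioo 0 T ∧
      (∀ t ∈ Ico (0:ℝ) t1,
        φ1 t < (ε0 - ε1) * (1 - Real.exp (-(r * (T - t)))) / r) ∧
      φ1 t1 = (ε0 - ε1) * (1 - Real.exp (-(r * (T - t1)))) / r ∧
      (∀ t ∈ Ioc t1 T,
        (ε0 - ε1) * (1 - Real.exp (-(r * (T - t)))) / r < φ1 t) := by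
  set E : ℝ → ℝ := fun t => (ε0 - ε1) * (1 - Real.exp (-(r * (T - t)))) / r with hE
  set g : ℝ → ℝ := fun t => φ1 t - E t with hg
  set h : ℝ → ℝ := fun t => Real.exp (-(r * t)) * g t with hh
  -- derivative of E
  have hEd : ∀ t : ℝ, HasDerivAt E (-((ε0 - ε1) * Real.exp (-(r * (T - t))))) t := by
    intro t
    have hu : HasDerivAt (fun s : ℝ => -(r * (T - s))) r t := by
      have : HasDerivAt (fun s : ℝ => r * s - r * T) r t := by
        simpa using ((hasDerivAt_id t).const_mul r).sub_const (r * T)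
      convert this using 2 with s
      ring
    have hexp := hu.exp
    have h1 : HasDerivAt (fun s : ℝ => 1 - Real.exp (-(r * (T - s))))
        (-(Real.exp (-(r * (T - t))) * r)) t := by
      exact ((hasDerivAt_const t (1:ℝ)).sub hexp).congr_deriv (by ring)
    have h2 := (h1.const_mul (ε0 - ε1)).div_const r
    refine h2.congr_deriv ?_
    field_simp
  -- derivative of h
  have hhd : ∀ t ∈ Icc (0:ℝ) T,
      HasDerivAt h (Real.exp (-(r * t)) * (φ1' t - r * φ1 t + (ε0 - ε1))) t := by
    intro t ht
    have hgd : HasDerivAt g (φ1' t - (-((ε0 - ε1) * Real.exp (-(r * (T - t)))))) t :=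
      (hderiv t ht).sub (hEd t)
    have hexpd : HasDerivAt (fun s : ℝ => Real.exp (-(r * s)))
        (Real.exp (-(r * t)) * (-r)) t := by
      have : HasDerivAt (fun s : ℝ => -(r * s)) (-r) t := by
        exact (((hasDerivAt_id t).const_mul r).neg).congr_deriv (by simp)
      exact this.exp
    have := hexpd.mul hgd
    refine this.congr_deriv ?_
    simp only [hg, hE]
    field_simp
    ring
  -- continuity of h on Icc
  have hhc : ContinuousOn h (Icc 0 T) := fun t ht =>
    ((hhd t ht).continuousAt).continuousWithinAt
  -- strict monotonicity of h on Icc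
  have hmono : StrictMonoOn h (Icc 0 T) := by
    apply strictMonoOn_of_deriv_pos (convex_Icc 0 T) hhc
    intro x hx
    rw [interior_Icc] at hx
    have hx' : x ∈ Icc (0:ℝ) T := ⟨hx.1.le, hx.2.le⟩
    rw [(hhd x hx').deriv]
    have h1 := hcost x hx'
    have h2 := Real.exp_pos (-(r * x))
    nlinarith
  -- endpoint values
  have hE0 : h 0 = φ1 0 - (ε0 - ε1) * (1 - Real.exp (-(r * T))) / r := by
    simp [hh, hg, hE]
  have hh0 : h 0 < 0 := by rw [hE0]; linarith
  have hhT : h T > 0 := by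
    have : E T = 0 := by simp [hE]
    have hp := hpos T ⟨hT.le, le_refl T⟩
    have he := Real.exp_pos (-(r * T))
    simp only [hh, hg, this, sub_zero]
    positivity
  -- IVT: unique zero
  obtain ⟨t1, ht1, hht1⟩ : ∃ t1 ∈ Ioo (0:ℝ) T, h t1 = 0 := by
    have := intermediate_value_Ioo hT.le hhc
    have h0mem : (0:ℝ) ∈ Ioo (h 0) (h T) := ⟨hh0, hhT⟩
    obtain ⟨t1, ht1, hv⟩ := this h0mem
    exact ⟨t1, ht1, hv⟩
  have ht1I : t1 ∈ Icc (0:ℝ) T := ⟨ht1.1.le, ht1.2.le⟩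
  -- g t1 = 0
  have hgt1 : φ1 t1 = E t1 := by
    have he := Real.exp_pos (-(r * t1))
    have : Real.exp (-(r * t1)) * g t1 = 0 := hht1
    have hg0 : g t1 = 0 := by
      rcases mul_eq_zero.mp this with h' | h'
      · exact absurd h' he.ne'
      · exact h'
    simpa [hg, sub_eq_zero] using hg0
  -- sign facts
  have hbefore : ∀ t ∈ Ico (0:ℝ) t1, φ1 t < E t := by
    intro t ht
    have htI : t ∈ Icc (0:ℝ) T := ⟨ht.1, ht.2.le.trans ht1.2.le⟩
    have := hmono htI ht1I ht.2
    rw [hht1] at this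
    have he := Real.exp_pos (-(r * t))
    have : g t < 0 := by
      by_contra hcon
      push_neg at hcon
      have := mul_nonneg he.le hcon
      simp only [hh] at *
      linarith
    simpa [hg, sub_neg] using this
  have hafter : ∀ t ∈ Ioc t1 T, E t < φ1 t := by
    intro t ht
    have htI : t ∈ Icc (0:ℝ) T := ⟨ht1.1.le.trans ht.1.le, ht.2⟩
    have := hmono ht1I htI ht.1
    rw [hht1] at this
    have he := Real.exp_pos (-(r * t))
    have : 0 < g t := by
      by_contra hcon
      push_neg at hcon
      have := mul_nonpos_of_nonneg_of_nonpos he.le hcon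
      simp only [hh] at *
      linarith
    simpa [hg, sub_pos] using this
  refine ⟨t1, ⟨ht1, hbefore, hgt1, hafter⟩, ?_⟩
  rintro y ⟨hy, hyb, hye, hya⟩
  by_contra hne
  rcases lt_or_gt_of_ne hne with hlt | hgt
  · have := hbefore y ⟨hy.1.le, hlt⟩
    rw [hye] at this
    exact lt_irrefl _ this
  · have := hafter y ⟨hgt, hy.2.le⟩
    rw [hye] at this
    exact lt_irrefl _ this
end

section
/- Let $\theta\in\mathbb{R}$, $\beta>0$, $r>0$, $q\ge0$, $\gamma_1>0$, and set $k:=2\big(\tfrac{2}{\gamma_1^2}+\tfrac{1}{\gamma_1}\big)\theta^2+\tfrac{4}{\gamma_1}(\beta+r)-r+4q+2$. For $x_0\in\mathbb{R}$ define $\Phi(\tau,x):=e^{k\tau}\big(e^{\frac{2}{\gamma_1}|x-x_0|}-\tfrac{2}{\gamma_1}|x-x_0|-1\big)$. Then for every $x_0\in\mathbb{R}$ and every $(\tau,x)\in\mathbb{R}^2$ with $x\ne x_0$, $\partial_\tau\Phi(\tau,x)-\tfrac{\theta^2}{2}\partial_{xx}\Phi(\tau,x)-\big(\beta-r+\tfrac{\theta^2}{2}\big)\partial_x\Phi(\tau,x)+r\,\Phi(\tau,x)\;\ge\;e^{k\tau}\Big[-(k+r)\,\mathbf{1}_{\{|x-x_0|\le\gamma_1\}}+(2q+1)\,e^{\frac{2}{\gamma_1}|x-x_0|}\Big]$.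 -/
open Real Set

/-- The auxiliary barrier `Φ(τ,x) = e^{kτ}(e^{(2/γ1)|x-x0|} - (2/γ1)|x-x0| - 1)`. -/
noncomputable def Phi (k γ1 x0 τ x : ℝ) : ℝ :=
  Real.exp (k * τ) * (Real.exp (2 / γ1 * |x - x0|) - 2 / γ1 * |x - x0| - 1)

/-- Cubic Taylor lower bound for `exp`. -/
lemma cubic_le_exp {t : ℝ} (ht : 0 ≤ t) :
    1 + t + t ^ 2 / 2 + t ^ 3 / 6 ≤ Real.exp t := by
  have h := Real.sum_le_exp_of_nonneg ht 4
  simp only [Finset.sum_range_succ, Finset.range_one, Finset.sum_singleton] at h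
  norm_num [Nat.factorial] at h
  linarith

/-- Derivatives of `Phi` near a point where `|z - x0| = s * (z - x0)`. -/
lemma phi_derivs (k γ1 x0 τ x s : ℝ) (hs : s = 1 ∨ s = -1)
    (h : ∀ᶠ z in nhds x, |z - x0| = s * (z - x0)) :
    deriv (fun t => Phi k γ1 x0 t x) τ
      = k * Real.exp (k * τ) *
        (Real.exp (2 / γ1 * |x - x0|) - 2 / γ1 * |x - x0| - 1)
    ∧ deriv (fun z => Phi k γ1 x0 τ z) x
      = Real.exp (k * τ) *
        (2 / γ1 * s * Real.exp (2 / γ1 * |x - x0|) - 2 / γ1 * s)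
    ∧ deriv (deriv (fun z => Phi k γ1 x0 τ z)) x
      = Real.exp (k * τ) * ((2 / γ1) ^ 2 * Real.exp (2 / γ1 * |x - x0|)) := by
  set a : ℝ := 2 / γ1 with ha
  have hs2 : s * s = 1 := by rcases hs with rfl | rfl <;> norm_num
  -- τ-derivative
  have hτ : deriv (fun t => Phi k γ1 x0 t x) τ
      = k * Real.exp (k * τ) * (Real.exp (a * |x - x0|) - a * |x - x0| - 1) := by
    have h1 : HasDerivAt (fun t : ℝ => Real.exp (k * t) *
        (Real.exp (a * |x - x0|) - a * |x - x0| - 1))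
        (k * Real.exp (k * τ) * (Real.exp (a * |x - x0|) - a * |x - x0| - 1)) τ := by
      have h0 := (((hasDerivAt_id τ).const_mul k).exp).mul_const
        (Real.exp (a * |x - x0|) - a * |x - x0| - 1)
      simp only [id_eq] at h0
      exact h0.congr_deriv (by ring)
    simp only [Phi]
    exact h1.deriv
  -- the smooth local model
  set g : ℝ → ℝ := fun z => Real.exp (k * τ) *
    (Real.exp (a * (s * (z - x0))) - a * (s * (z - x0)) - 1) with hgdef
  have hPhig : (fun z => Phi k γ1 x0 τ z) =ᶠ[nhds x] g := by
    filter_upwards [h] with z hz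
    simp only [Phi, hgdef, ← ha, hz, mul_assoc]
  have hinner : ∀ y : ℝ, HasDerivAt (fun y : ℝ => a * (s * (y - x0))) (a * s) y := by
    intro y
    have := (((hasDerivAt_id y).sub_const x0).const_mul s).const_mul a
    simpa using this
  have hg : ∀ y : ℝ, HasDerivAt g
      (Real.exp (k * τ) * (a * s * Real.exp (a * (s * (y - x0))) - a * s)) y := by
    intro y
    have h2 := (((hinner y).exp).sub (hinner y)).sub_const 1
    have h3 := h2.const_mul (Real.exp (k * τ))
    exact h3.congr_deriv (by ring)
  have hderivg : deriv g = fun y =>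
      Real.exp (k * τ) * (a * s * Real.exp (a * (s * (y - x0))) - a * s) :=
    deriv_eq hg
  have hg2 : HasDerivAt (deriv g)
      (Real.exp (k * τ) * (a ^ 2 * Real.exp (a * (s * (x - x0))))) x := by
    rw [hderivg]
    have h2 := (((hinner x).exp.const_mul (a * s)).sub_const (a * s)).const_mul
      (Real.exp (k * τ))
    exact h2.congr_deriv (by linear_combination (Real.exp (k * τ) * a ^ 2 * Real.exp (a * (s * (x - x0)))) * hs2)
  have hxv : |x - x0| = s * (x - x0) := h.self_of_nhds
  refine ⟨hτ, ?_, ?_⟩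
  · rw [hPhig.deriv_eq, (hg x).deriv, ← hxv]
  · rw [Filter.EventuallyEq.deriv_eq hPhig.deriv, hg2.deriv, ← hxv]

set_option maxHeartbeats 1000000 in
/-- The barrier `Φ` satisfies
`∂_τ Φ - (θ²/2) ∂_{xx} Φ - (β-r+θ²/2) ∂_x Φ + r Φ
  ≥ e^{kτ}[-(k+r) 1_{|x-x0|≤γ1} + (2q+1) e^{(2/γ1)|x-x0|}]` away from `x = x0`. -/
theorem stmt8 (θ β r q γ1 k : ℝ)
    (hβ : 0 < β) (hr : 0 < r) (hq : 0 ≤ q) (hγ1 : 0 < γ1)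
    (hk : k = 2 * (2 / γ1 ^ 2 + 1 / γ1) * θ ^ 2 + 4 / γ1 * (β + r) - r + 4 * q + 2) :
    ∀ x0 τ x : ℝ, x ≠ x0 →
      deriv (fun t => Phi k γ1 x0 t x) τ
        - θ ^ 2 / 2 * deriv (deriv (fun z => Phi k γ1 x0 τ z)) x
        - (β - r + θ ^ 2 / 2) * deriv (fun z => Phi k γ1 x0 τ z) x
        + r * Phi k γ1 x0 τ x
      ≥ Real.exp (k * τ) *
          (-(k + r) * (if |x - x0| ≤ γ1 then (1:ℝ) else 0)
            + (2 * q + 1) * Real.exp (2 / γ1 * |x - x0|)) := by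
  intro x0 τ x hx
  -- the key identity: k + r = 2*((θ²/2)a² + (β+r+θ²/2)a + 2q+1)
  have hK : k + r = 2 * (θ ^ 2 / 2 * (2 / γ1) ^ 2
      + (β + r + θ ^ 2 / 2) * (2 / γ1) + (2 * q + 1)) := by
    rw [hk]
    field_simp
    ring
  have hK0 : 0 ≤ k + r := by
    rw [hK]
    have h1 : 0 ≤ (β + r + θ ^ 2 / 2) * (2 / γ1) := by positivity
    nlinarith [sq_nonneg θ, sq_nonneg (2 / γ1)]
  -- choose the sign s
  obtain ⟨s, hs, hev⟩ : ∃ s : ℝ, (s = 1 ∨ s = -1) ∧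
      ∀ᶠ z in nhds x, |z - x0| = s * (z - x0) := by
    rcases lt_or_gt_of_ne hx with hlt | hgt
    · refine ⟨-1, Or.inr rfl, ?_⟩
      filter_upwards [IsOpen.mem_nhds isOpen_Iio hlt] with z hz
      rw [abs_of_neg (by linarith [mem_Iio.mp hz])]; ring
    · refine ⟨1, Or.inl rfl, ?_⟩
      filter_upwards [IsOpen.mem_nhds isOpen_Ioi hgt] with z hz
      rw [abs_of_pos (by linarith [mem_Ioi.mp hz])]; ring
  obtain ⟨d0, d1, d2⟩ := phi_derivs k γ1 x0 τ x s hs hev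
  rw [d0, d1, d2, Phi]
  set a : ℝ := 2 / γ1 with ha
  set u : ℝ := |x - x0| with hu
  set E : ℝ := Real.exp (a * u) with hE
  set I : ℝ := if u ≤ γ1 then (1:ℝ) else 0 with hI
  have ha0 : 0 < a := by positivity
  have hu0 : 0 < u := abs_pos.mpr (sub_ne_zero.mpr hx)
  have ht0 : 0 < a * u := mul_pos ha0 hu0
  have hcubic : 1 + a * u + (a * u) ^ 2 / 2 + (a * u) ^ 3 / 6 ≤ E :=
    cubic_le_exp ht0.le
  have hE1 : 1 < E := by nlinarith
  have hE2t : 2 * (a * u) ≤ E := by nlinarith [sq_nonneg (a * u - 1)]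
  have hs2 : s * s = 1 := by rcases hs with rfl | rfl <;> norm_num
  -- bound on the drift term
  have hB : (β - r + θ ^ 2 / 2) * (a * s * E - a * s)
      ≤ (β + r + θ ^ 2 / 2) * (a * (E - 1)) := by
    have h1 : (β - r + θ ^ 2 / 2) * s ≤ β + r + θ ^ 2 / 2 := by
      rcases hs with rfl | rfl <;> nlinarith [sq_nonneg θ]
    have h2 : 0 ≤ a * (E - 1) := by nlinarith
    calc (β - r + θ ^ 2 / 2) * (a * s * E - a * s)
        = ((β - r + θ ^ 2 / 2) * s) * (a * (E - 1)) := by ring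
      _ ≤ (β + r + θ ^ 2 / 2) * (a * (E - 1)) :=
        mul_le_mul_of_nonneg_right h1 h2
  -- core inequality (after dividing by e^{kτ})
  have core : -(k + r) * I + (2 * q + 1) * E
      ≤ k * (E - a * u - 1) - θ ^ 2 / 2 * (a ^ 2 * E)
        - (β - r + θ ^ 2 / 2) * (a * s * E - a * s) + r * (E - a * u - 1) := by
    have main : -(k + r) * I + (2 * q + 1) * E
        ≤ (k + r) * (E - a * u - 1) - θ ^ 2 / 2 * (a ^ 2 * E)
          - (β + r + θ ^ 2 / 2) * (a * (E - 1)) := by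
      by_cases hcase : u ≤ γ1
      · rw [hI, if_pos hcase]
        have hBa : 0 ≤ (β + r + θ ^ 2 / 2) * a := by positivity
        nlinarith [mul_le_mul_of_nonneg_left hE2t hK0]
      · rw [hI, if_neg hcase]
        push_neg at hcase
        have ht2 : 2 < a * u := by
          rw [ha]
          rw [div_mul_eq_mul_div, lt_div_iff₀ hγ1]
          nlinarith
        have hE22 : 2 * (a * u) + 2 ≤ E := by nlinarith
        nlinarith [mul_le_mul_of_nonneg_left hE22 hK0]
    linarith [hB]
  have hexp : (0:ℝ) ≤ Real.exp (k * τ) := (Real.exp_pos _).le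
  calc Real.exp (k * τ) * (-(k + r) * I + (2 * q + 1) * E)
      ≤ Real.exp (k * τ) * (k * (E - a * u - 1) - θ ^ 2 / 2 * (a ^ 2 * E)
          - (β - r + θ ^ 2 / 2) * (a * s * E - a * s) + r * (E - a * u - 1)) :=
        mul_le_mul_of_nonneg_left core hexp
    _ = k * Real.exp (k * τ) * (E - a * u - 1)
          - θ ^ 2 / 2 * (Real.exp (k * τ) * (a ^ 2 * E))
          - (β - r + θ ^ 2 / 2) * (Real.exp (k * τ) * (a * s * E - a * s))
          + r * (Real.exp (k * τ) * (E - a * u - 1)) := by ring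
end

section
/- Let $r>0$, $T>0$, $q>0$, $\varepsilon_0>\varepsilon_1\ge0$, and let $\psi_0,\psi_1:[0,T]\to(0,\infty)$ be continuously differentiable with $|\psi_1'(\tau)|\le q$ for all $\tau\in[0,T]$. Let $\varepsilon>0$ satisfy $\varepsilon<\psi_0(\tau)$ and $\varepsilon<\psi_1(\tau)$ for all $\tau\in[0,T]$, and let $\beta_0,\beta_1:\mathbb{R}\to\mathbb{R}$ satisfy $\beta_0\ge0$ with $\beta_0(\lambda)=0$ whenever $\lambda\ge\varepsilon$, and $\beta_1\le0$ with $\beta_1(0)=-(\varepsilon_0-\varepsilon_1)-q$. Define $\rho_1(\tau):=\min\{\mathcal{E}(\tau),\psi_1(\tau)\}$. Then for every $\tau\in(0,T)$ with $\mathcal{E}(\tau)\ne\psi_1(\tau)$, $\rho_1$ is differentiable at $\tau$ and $\rho_1'(\tau)+r\,\rho_1(\tau)-\beta_0\big(\rho_1(\tau)+\psi_0(\tau)\big)-\beta_1\big(\rho_1(\tau)-\psi_1(\tau)\big)\;\ge\;\varepsilon_0-\varepsilon_1$. -/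
open Real Set

/-- The upper lateral boundary datum `ρ1 = min{𝓔, ψ1}` is, away from the kink
`𝓔(τ) = ψ1(τ)`, differentiable and a supersolution of the penalized equation:
`ρ1' + r ρ1 - β0(ρ1+ψ0) - β1(ρ1-ψ1) ≥ ε0 - ε1`. Here `𝓔(τ) = (ε0-ε1)(1-e^{-rτ})/r`. -/
theorem stmt12 (r T q ε0 ε1 ε : ℝ) (ψ0 ψ1 ψ0' ψ1' : ℝ → ℝ) (β0 β1 : ℝ → ℝ)
    (hr : 0 < r) (hT : 0 < T) (hq : 0 < q) (hε1 : 0 ≤ ε1) (hε : ε1 < ε0)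
    (hψ0pos : ∀ τ ∈ Icc (0:ℝ) T, 0 < ψ0 τ)
    (hψ1pos : ∀ τ ∈ Icc (0:ℝ) T, 0 < ψ1 τ)
    (hψ0deriv : ∀ τ ∈ Icc (0:ℝ) T, HasDerivAt ψ0 (ψ0' τ) τ)
    (hψ1deriv : ∀ τ ∈ Icc (0:ℝ) T, HasDerivAt ψ1 (ψ1' τ) τ)
    (hψ0cont : ContinuousOn ψ0' (Icc 0 T))
    (hψ1cont : ContinuousOn ψ1' (Icc 0 T))
    (hψ1'bd : ∀ τ ∈ Icc (0:ℝ) T, |ψ1' τ| ≤ q)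
    (hεpos : 0 < ε)
    (hεψ0 : ∀ τ ∈ Icc (0:ℝ) T, ε < ψ0 τ)
    (hεψ1 : ∀ τ ∈ Icc (0:ℝ) T, ε < ψ1 τ)
    (hβ0nonneg : ∀ l : ℝ, 0 ≤ β0 l)
    (hβ0zero : ∀ l : ℝ, ε ≤ l → β0 l = 0)
    (hβ1nonpos : ∀ l : ℝ, β1 l ≤ 0)
    (hβ1zero : β1 0 = -(ε0 - ε1) - q) :
    ∀ τ ∈ Ioo (0:ℝ) T,
      (ε0 - ε1) * (1 - Real.exp (-(r * τ))) / r ≠ ψ1 τ →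
      DifferentiableAt ℝ
        (fun s => min ((ε0 - ε1) * (1 - Real.exp (-(r * s))) / r) (ψ1 s)) τ ∧
      deriv (fun s => min ((ε0 - ε1) * (1 - Real.exp (-(r * s))) / r) (ψ1 s)) τ
        + r * min ((ε0 - ε1) * (1 - Real.exp (-(r * τ))) / r) (ψ1 τ)
        - β0 (min ((ε0 - ε1) * (1 - Real.exp (-(r * τ))) / r) (ψ1 τ) + ψ0 τ)
        - β1 (min ((ε0 - ε1) * (1 - Real.exp (-(r * τ))) / r) (ψ1 τ) - ψ1 τ)
      ≥ ε0 - ε1 := by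
  intro τ hτ hne
  have hτI : τ ∈ Icc (0:ℝ) T := ⟨hτ.1.le, hτ.2.le⟩
  set E : ℝ → ℝ := fun s => (ε0 - ε1) * (1 - Real.exp (-(r * s))) / r with hEdef
  have hEderiv : HasDerivAt E ((ε0 - ε1) * Real.exp (-(r * τ))) τ := by
    have h1 : HasDerivAt (fun s : ℝ => -(r * s)) (-r) τ := by
      have h := (hasDerivAt_id' τ).const_mul (-r)
      rw [mul_one] at h
      exact h.congr_of_eventuallyEq (Filter.Eventually.of_forall fun s => by ring)
    have h3 : HasDerivAt E ((ε0 - ε1) * (0 - Real.exp (-(r * τ)) * (-r)) / r) τ :=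
      (((hasDerivAt_const τ (1:ℝ)).sub h1.exp).const_mul (ε0 - ε1)).div_const r
    convert h3 using 1
    field_simp
    ring
  have hψ1d := hψ1deriv τ hτI
  have hEcont : ContinuousAt E τ := hEderiv.continuousAt
  have hψ1c : ContinuousAt ψ1 τ := hψ1d.continuousAt
  have hEnonneg : 0 ≤ E τ := by
    have hexp : Real.exp (-(r * τ)) ≤ 1 := by
      rw [Real.exp_le_one_iff]
      nlinarith [hτ.1, hr]
    have : 0 ≤ (ε0 - ε1) * (1 - Real.exp (-(r * τ))) / r := by
      apply div_nonneg _ hr.le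
      nlinarith
    simpa [hEdef] using this
  rcases lt_or_gt_of_ne hne with hlt | hgt
  · -- case E τ < ψ1 τ : min is eventually E
    have hev : (fun s => min (E s) (ψ1 s)) =ᶠ[nhds τ] E := by
      have hpos : ∀ᶠ s in nhds τ, E s < ψ1 s := by
        have : ContinuousAt (fun s => ψ1 s - E s) τ := hψ1c.sub hEcont
        have h0 : (0:ℝ) < ψ1 τ - E τ := by simpa [hEdef] using sub_pos.mpr hlt
        filter_upwards [continuousAt_const.eventually_lt this h0] with s hs
        · linarith [hs]
      filter_upwards [hpos] with s hs
      exact min_eq_left hs.le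
    have hdiff : DifferentiableAt ℝ (fun s => min (E s) (ψ1 s)) τ :=
      (Filter.EventuallyEq.differentiableAt_iff hev).mpr hEderiv.differentiableAt
    have hderiv : deriv (fun s => min (E s) (ψ1 s)) τ = (ε0 - ε1) * Real.exp (-(r * τ)) := by
      rw [Filter.EventuallyEq.deriv_eq hev, hEderiv.deriv]
    have hmin : min (E τ) (ψ1 τ) = E τ := min_eq_left hlt.le
    refine ⟨hdiff, ?_⟩
    have hβ0 : β0 (min (E τ) (ψ1 τ) + ψ0 τ) = 0 := by
      apply hβ0zero
      have := hεψ0 τ hτI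
      rw [hmin]; linarith
    have hβ1 : β1 (min (E τ) (ψ1 τ) - ψ1 τ) ≤ 0 := hβ1nonpos _
    rw [hmin] at hβ1
    rw [hderiv, hβ0, hmin]
    have hkey : (ε0 - ε1) * Real.exp (-(r * τ)) + r * E τ = ε0 - ε1 := by
      simp only [hEdef]
      field_simp
      ring
    linarith [hβ1]
  · -- case ψ1 τ < E τ : min is eventually ψ1
    have hev : (fun s => min (E s) (ψ1 s)) =ᶠ[nhds τ] ψ1 := by
      have hpos : ∀ᶠ s in nhds τ, ψ1 s < E s := by
        have hc : ContinuousAt (fun s => E s - ψ1 s) τ := hEcont.sub hψ1c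
        have h0 : (0:ℝ) < E τ - ψ1 τ := by simpa [hEdef] using sub_pos.mpr hgt
        filter_upwards [continuousAt_const.eventually_lt hc h0] with s hs
        · linarith [hs]
      filter_upwards [hpos] with s hs
      exact min_eq_right hs.le
    have hdiff : DifferentiableAt ℝ (fun s => min (E s) (ψ1 s)) τ :=
      (Filter.EventuallyEq.differentiableAt_iff hev).mpr hψ1d.differentiableAt
    have hderiv : deriv (fun s => min (E s) (ψ1 s)) τ = ψ1' τ := by
      rw [Filter.EventuallyEq.deriv_eq hev, hψ1d.deriv]
    have hmin : min (E τ) (ψ1 τ) = ψ1 τ := min_eq_right hgt.le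
    refine ⟨hdiff, ?_⟩
    have hβ0 : β0 (min (E τ) (ψ1 τ) + ψ0 τ) = 0 := by
      apply hβ0zero
      have h1 := hεψ1 τ hτI
      have h2 := hψ0pos τ hτI
      rw [hmin]; linarith
    have hβ1 : β1 (min (E τ) (ψ1 τ) - ψ1 τ) = -(ε0 - ε1) - q := by
      rw [hmin, sub_self, hβ1zero]
    rw [hderiv, hβ0, hβ1, hmin]
    have h1 : -q ≤ ψ1' τ := by
      have := hψ1'bd τ hτI
      have := abs_le.mp this
      linarith [this.1]
    have h2 : 0 < ψ1 τ := hψ1pos τ hτI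
    nlinarith
end

section
/- Let $r>0$, $T>0$, $q>0$, $\gamma>0$ with $\gamma\ne1$, $\alpha\in(0,1)$, $\gamma_1:=1-\alpha(1-\gamma)$, $0<L_0<L_1$, $\varepsilon_0>\varepsilon_1\ge0$, and $n\in\mathbb{R}$. Let $\psi_0,\psi_1:[0,T]\to(0,\infty)$ be continuously differentiable with $|\psi_0'(\tau)|\le q$ for all $\tau\in[0,T]$. Let $\varepsilon>0$ satisfy $\varepsilon<\psi_1(\tau)$ for all $\tau\in[0,T]$, and let $\beta_0,\beta_1:\mathbb{R}\to\mathbb{R}$ satisfy $\beta_0\ge0$ with $\beta_0(0)=A\,e^{n/\gamma_1}+q$, and $\beta_1(\lambda)=0$ whenever $\lambda\le-\varepsilon$. Define $\mathcal{G}(\tau):=A\,e^{n/\gamma_1}\,\tau$ and $\rho_0(\tau):=\max\{-\mathcal{G}(\tau),-\psi_0(\tau)\}$. Then for every $\tau\in(0,T)$ with $\mathcal{G}(\tau)\ne\psi_0(\tau)$, $\rho_0$ is differentiable at $\tau$ and $\rho_0'(\tau)+r\,\rho_0(\tau)-\beta_0\big(\rho_0(\tau)+\psi_0(\tau)\big)-\beta_1\big(\rho_0(\tau)-\psi_1(\tau)\big)\;\le\;-A\,e^{n/\gamma_1}\;\le\;U(x)\quad\text{for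 every }x\ge-n. -/
open Real Set

/-- The lower lateral boundary datum `ρ0 = max{-𝒢, -ψ0}`, with
`𝒢(τ) = A e^{n/γ1} τ`, is, away from the kink `𝒢(τ) = ψ0(τ)`, differentiable and a
subsolution of the penalized equation:
`ρ0' + r ρ0 - β0(ρ0+ψ0) - β1(ρ0-ψ1) ≤ -A e^{n/γ1} ≤ U(x)` for all `x ≥ -n`,
where `U(x) = (ε0-ε1) - A e^{-x/γ1}` and
`A = γ1/(1-γ1)(L1^{(γ1-γ)/γ1} - L0^{(γ1-γ)/γ1})`. -/
theorem stmt13 (r T q γ α γ1 L0 L1 ε0 ε1 n A ε : ℝ)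
    (ψ0 ψ1 ψ0' ψ1' : ℝ → ℝ) (β0 β1 : ℝ → ℝ)
    (hr : 0 < r) (hT : 0 < T) (hq : 0 < q)
    (hγ : 0 < γ) (hγne : γ ≠ 1) (hα : α ∈ Ioo (0:ℝ) 1)
    (hγ1 : γ1 = 1 - α * (1 - γ)) (hL0 : 0 < L0) (hL : L0 < L1)
    (hε1 : 0 ≤ ε1) (hε : ε1 < ε0)
    (hA : A = γ1 / (1 - γ1) * (L1 ^ ((γ1 - γ) / γ1) - L0 ^ ((γ1 - γ) / γ1)))
    (hψ0pos : ∀ τ ∈ Icc (0:ℝ) T, 0 < ψ0 τ)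
    (hψ1pos : ∀ τ ∈ Icc (0:ℝ) T, 0 < ψ1 τ)
    (hψ0deriv : ∀ τ ∈ Icc (0:ℝ) T, HasDerivAt ψ0 (ψ0' τ) τ)
    (hψ1deriv : ∀ τ ∈ Icc (0:ℝ) T, HasDerivAt ψ1 (ψ1' τ) τ)
    (hψ0cont : ContinuousOn ψ0' (Icc 0 T))
    (hψ1cont : ContinuousOn ψ1' (Icc 0 T))
    (hψ0'bd : ∀ τ ∈ Icc (0:ℝ) T, |ψ0' τ| ≤ q)
    (hεpos : 0 < ε)
    (hεψ1 : ∀ τ ∈ Icc (0:ℝ) T, ε < ψ1 τ)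
    (hβ0nonneg : ∀ l : ℝ, 0 ≤ β0 l)
    (hβ0zero : β0 0 = A * Real.exp (n / γ1) + q)
    (hβ1zero : ∀ l : ℝ, l ≤ -ε → β1 l = 0) :
    ∀ τ ∈ Ioo (0:ℝ) T,
      A * Real.exp (n / γ1) * τ ≠ ψ0 τ →
      DifferentiableAt ℝ
        (fun s => max (-(A * Real.exp (n / γ1) * s)) (-ψ0 s)) τ ∧
      deriv (fun s => max (-(A * Real.exp (n / γ1) * s)) (-ψ0 s)) τ
        + r * max (-(A * Real.exp (n / γ1) * τ)) (-ψ0 τ)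
        - β0 (max (-(A * Real.exp (n / γ1) * τ)) (-ψ0 τ) + ψ0 τ)
        - β1 (max (-(A * Real.exp (n / γ1) * τ)) (-ψ0 τ) - ψ1 τ)
      ≤ -(A * Real.exp (n / γ1)) ∧
      ∀ x : ℝ, -n ≤ x →
        -(A * Real.exp (n / γ1)) ≤ (ε0 - ε1) - A * Real.exp (-x / γ1) := by
  intro τ hτ hne
  have hτI : τ ∈ Icc (0:ℝ) T := ⟨hτ.1.le, hτ.2.le⟩
  have hγ1pos : 0 < γ1 := by nlinarith [hα.1, hα.2, hγ]
  set c := A * Real.exp (n / γ1) with hc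
  have hApos : 0 < A := by
    rcases lt_or_gt_of_ne hγne with h | h
    · have he : 0 < (γ1 - γ) / γ1 := by
        apply div_pos _ hγ1pos; nlinarith [hα.1, hα.2]
      have hd := Real.rpow_lt_rpow hL0.le hL he
      have h1 : 0 < 1 - γ1 := by nlinarith [hα.1, hα.2]
      rw [hA]
      exact mul_pos (div_pos hγ1pos h1) (by linarith)
    · have he : (γ1 - γ) / γ1 < 0 := by
        apply div_neg_of_neg_of_pos _ hγ1pos; nlinarith [hα.1, hα.2]
      have hd := Real.rpow_lt_rpow_of_neg hL0 hL he
      have h1 : 1 - γ1 < 0 := by nlinarith [hα.1, hα.2]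
      rw [hA]
      exact mul_pos_of_neg_of_neg (div_neg_of_pos_of_neg hγ1pos h1) (by linarith)
  have hcpos : 0 < c := mul_pos hApos (Real.exp_pos _)
  have hψ0d : HasDerivAt ψ0 (ψ0' τ) τ := hψ0deriv τ hτI
  have hGd : HasDerivAt (fun s : ℝ => -(c * s)) (-c) τ := by
    simpa using (show HasDerivAt (fun s : ℝ => -(c * id s)) (-(c * 1)) τ from ((hasDerivAt_id τ).const_mul c).neg)
  have hψ0τ := hψ0pos τ hτI
  have hψ1τ := hψ1pos τ hτI
  have hεψ1τ := hεψ1 τ hτI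
  have hUx : ∀ x : ℝ, -n ≤ x → -c ≤ (ε0 - ε1) - A * Real.exp (-x / γ1) := by
    intro x hx
    have hle : -x / γ1 ≤ n / γ1 := by
      apply (div_le_div_iff_of_pos_right hγ1pos).mpr; linarith
    have : A * Real.exp (-x / γ1) ≤ c :=
      mul_le_mul_of_nonneg_left (Real.exp_le_exp.mpr hle) hApos.le
    linarith
  rcases lt_or_gt_of_ne hne with hlt | hgt
  · have hgtv : -ψ0 τ < -(c * τ) := by linarith
    have hev : ∀ᶠ s in nhds τ, -ψ0 s < -(c * s) :=
      (hψ0d.continuousAt.neg).eventually_lt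
        ((continuous_mul_left c).continuousAt.neg) hgtv
    have heq : (fun s => max (-(c * s)) (-ψ0 s)) =ᶠ[nhds τ] fun s => -(c * s) :=
      hev.mono fun s hs => max_eq_left hs.le
    have hdiff : DifferentiableAt ℝ (fun s => max (-(c * s)) (-ψ0 s)) τ :=
      heq.differentiableAt_iff.mpr hGd.differentiableAt
    refine ⟨hdiff, ?_, hUx⟩
    have hder : deriv (fun s => max (-(c * s)) (-ψ0 s)) τ = -c := by
      rw [heq.deriv_eq, hGd.deriv]
    have hmax : max (-(c * τ)) (-ψ0 τ) = -(c * τ) := max_eq_left hgtv.le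
    have hcτ : 0 < c * τ := mul_pos hcpos hτ.1
    have hβ1 : β1 (max (-(c * τ)) (-ψ0 τ)  - ψ1 τ) = 0 := by
      rw [hmax]; exact hβ1zero _ (by linarith)
    rw [hder, hβ1, hmax]
    have := hβ0nonneg (-(c * τ) + ψ0 τ)
    nlinarith
  · have hltv : -(c * τ) < -ψ0 τ := by linarith
    have hev : ∀ᶠ s in nhds τ, -(c * s) < -ψ0 s :=
      ((continuous_mul_left c).continuousAt.neg).eventually_lt
        (hψ0d.continuousAt.neg) hltv
    have heq : (fun s => max (-(c * s)) (-ψ0 s)) =ᶠ[nhds τ] fun s => -ψ0 s :=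
      hev.mono fun s hs => max_eq_right hs.le
    have hdiff : DifferentiableAt ℝ (fun s => max (-(c * s)) (-ψ0 s)) τ :=
      heq.differentiableAt_iff.mpr hψ0d.neg.differentiableAt
    refine ⟨hdiff, ?_, hUx⟩
    have hder : deriv (fun s => max (-(c * s)) (-ψ0 s)) τ = -ψ0' τ := by
      rw [heq.deriv_eq, (show HasDerivAt (fun s => -ψ0 s) (-ψ0' τ) τ from hψ0d.neg).deriv]
    have hmax : max (-(c * τ)) (-ψ0 τ) = -ψ0 τ := max_eq_right hltv.le
    have hβ1 : β1 (max (-(c * τ)) (-ψ0 τ) - ψ1 τ) = 0 := by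
      rw [hmax]; exact hβ1zero _ (by linarith)
    have hβ0 : β0 (max (-(c * τ)) (-ψ0 τ) + ψ0 τ) = c + q := by
      rw [hmax]; simpa using hβ0zero
    have hbd := abs_le.mp (hψ0'bd τ hτI)
    rw [hder, hβ1, hβ0, hmax]
    nlinarith
end
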